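/- Let C be an algebraically closed field, let n ≥ 1 and q ≥ 2 be integers, and let g, h ∈ GL_n(C) satisfy h g h⁻¹ = g^q. Then (g^{q^{n!} − 1} − 1)^n = 0 in M_n(C). -/

import Mathlib

open Polynomial in
lemma aux_mem_spectrum_iff_isRoot {C : Type*} [Field C] {n : ℕ}
    (M : Matrix (Fin n) (Fin n) C) (μ : C) :
    μ ∈ spectrum C M ↔ M.charpoly.IsRoot μ := by
  have hs : (algebraMap C (Matrix (Fin n) (Fin n) C)) μ = Matrix.scalar (Fin n) μ := by
    ext i j
    simp [Matrix.algebraMap_matrix_apply, Matrix.scalar_apply, Matrix.diagonal_apply]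
  rw [spectrum.mem_iff, Polynomial.IsRoot, Matrix.charpoly, _root_.eval_det,
    Matrix.matPolyEquiv_charmatrix, eval_sub, eval_X, eval_C, hs,
    Matrix.isUnit_iff_isUnit_det, isUnit_iff_ne_zero, not_not]

open Polynomial in
/-- If `h g h⁻¹ = g^q` in `GL_n` over an algebraically closed field, then
`(g^{q^{n!} - 1} - 1)^n = 0`. -/
theorem nilpotent_of_qPower_conjugate
    {C : Type*} [Field C] [IsAlgClosed C]
    (n : ℕ) (hn : 1 ≤ n) (q : ℕ) (hq : 2 ≤ q)
    (g h : GL (Fin n) C) (hconj : h * g * h⁻¹ = g ^ q) :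
    ((g : Matrix (Fin n) (Fin n) C) ^ (q ^ (n.factorial) - 1)
      - (1 : Matrix (Fin n) (Fin n) C)) ^ n = 0 := by
  classical
  set A : Matrix (Fin n) (Fin n) C := (g : Matrix (Fin n) (Fin n) C) with hA
  set S : Set C := spectrum C A with hS
  set f : C → C := fun x => x ^ q with hf
  -- conjugation gives `spectrum (A^q) = spectrum A`
  have hconj' : (h : Matrix (Fin n) (Fin n) C) * A * (h⁻¹ : GL (Fin n) C) = A ^ q := by
    have := congrArg (Units.val) hconj
    simpa [Units.val_mul] using this
  have hspecconj : spectrum C (A ^ q) = S := by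
    rw [← hconj']
    exact spectrum.units_conjugate
  -- spectral mapping theorem: `f '' S = S`
  have hmap : f '' S = S := by
    have hdeg : 0 < (X ^ q : C[X]).degree := by
      rw [degree_X_pow]; exact_mod_cast by omega
    have := spectrum.map_polynomial_aeval_of_degree_pos A (X ^ q : C[X]) hdeg
    simp only [map_pow, aeval_X, eval_pow, eval_X] at this
    rw [hspecconj] at this
    exact this.symm
  -- `S` is finite with at most `n` elements
  have hchar0 : A.charpoly ≠ 0 := A.charpoly_monic.ne_zero
  have hsub : S ⊆ ↑A.charpoly.roots.toFinset := by
    intro μ hμ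
    rw [Finset.mem_coe, Multiset.mem_toFinset, mem_roots hchar0]
    exact (aux_mem_spectrum_iff_isRoot A μ).mp hμ
  have hfin : S.Finite := Set.Finite.subset (Set.finite_mem_finset _) hsub
  have hcard : A.charpoly.roots.toFinset.card ≤ n := by
    calc A.charpoly.roots.toFinset.card ≤ Multiset.card A.charpoly.roots :=
          Multiset.toFinset_card_le _
      _ ≤ A.charpoly.natDegree := card_roots' _
      _ = n := by simp [Matrix.charpoly_natDegree_eq_dim]
  -- `f` is injective on `S`
  have hmaps : Set.MapsTo f S S :=
    fun x hx => hmap ▸ Set.mem_image_of_mem f hx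
  have hbij : Set.BijOn f S S :=
    (hfin.surjOn_iff_bijOn_of_mapsTo hmaps).mp (by rw [Set.SurjOn, hmap])
  have hinjit : ∀ k : ℕ, Set.InjOn (f^[k]) S := by
    intro k
    induction k with
    | zero => simpa using Set.injOn_id S
    | succ k ih =>
      rw [Function.iterate_succ]
      exact Set.InjOn.comp ih hbij.injOn hmaps
  have hmapsit : ∀ k : ℕ, Set.MapsTo (f^[k]) S S := by
    intro k
    induction k with
    | zero => simpa using Set.mapsTo_id S
    | succ k ih =>
      rw [Function.iterate_succ]
      exact Set.MapsTo.comp ih hmaps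
  -- iterates of `f` are power maps
  have hiter : ∀ (k : ℕ) (x : C), f^[k] x = x ^ q ^ k := by
    intro k
    induction k with
    | zero => simp
    | succ k ih =>
      intro x
      rw [Function.iterate_succ_apply', ih, hf, pow_succ, pow_mul]
  -- every element of the spectrum is fixed by `f^[n!]`
  have hfix : ∀ μ ∈ S, μ ^ q ^ n.factorial = μ := by
    intro μ hμ
    -- pigeonhole among `μ, f μ, …, f^[n] μ`
    obtain ⟨i, hi, j, hj, hne, hij⟩ :
        ∃ i ∈ Finset.range (n + 1), ∃ j ∈ Finset.range (n + 1),
          i ≠ j ∧ f^[i] μ = f^[j] μ := by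
      obtain ⟨i, hi, j, hj, hne, hij⟩ :=
        Finset.exists_ne_map_eq_of_card_lt_of_maps_to
          (s := Finset.range (n + 1)) (t := A.charpoly.roots.toFinset)
          (by rw [Finset.card_range]; omega)
          (fun k _ => hsub (hmapsit k hμ))
      exact ⟨i, hi, j, hj, hne, hij⟩
    -- wlog `i < j`; cancel `f^[i]` to get a genuine period `d` of `μ`
    have key : ∀ i j : ℕ, i < j → j ≤ n → f^[i] μ = f^[j] μ →
        ∃ d : ℕ, 1 ≤ d ∧ d ≤ n ∧ f^[d] μ = μ := by
      intro i j hlt hjn hijeq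
      refine ⟨j - i, by omega, by omega, ?_⟩
      have : f^[i] (f^[j - i] μ) = f^[i] μ := by
        rw [← Function.iterate_add_apply]
        rw [hijeq]; congr 1; omega
      exact hinjit i (hmapsit (j - i) hμ) hμ this
    have hper : ∃ d : ℕ, 1 ≤ d ∧ d ≤ n ∧ f^[d] μ = μ := by
      rw [Finset.mem_range] at hi hj
      rcases lt_or_gt_of_ne hne with hlt | hlt
      · exact key i j hlt (by omega) hij
      · exact key j i hlt (by omega) hij.symm
    obtain ⟨d, hd1, hdn, hdfix⟩ := hper
    -- `d ∣ n!`, so `f^[n!] μ = μ`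
    obtain ⟨m, hm⟩ := Nat.dvd_factorial hd1 hdn
    have : f^[n.factorial] μ = μ := by
      rw [hm, Function.iterate_mul]
      exact Function.IsFixedPt.iterate hdfix m
    rwa [hiter] at this
  -- elements of the spectrum are nonzero
  have hne0 : ∀ μ ∈ S, μ ≠ 0 := by
    intro μ hμ h0
    rw [h0, hS, spectrum.zero_mem_iff] at hμ
    exact hμ g.isUnit
  set N : ℕ := q ^ n.factorial - 1 with hN
  have hN1 : 1 ≤ N := by
    have : 2 ≤ q ^ n.factorial := le_trans hq (Nat.le_self_pow n.factorial_ne_zero q)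
    omega
  have hroot1 : ∀ μ ∈ S, μ ^ N = 1 := by
    intro μ hμ
    have h1 : μ ^ N * μ = μ := by
      rw [← pow_succ, hN, Nat.sub_add_cancel (by omega)]
      exact hfix μ hμ
    have := hne0 μ hμ
    field_simp at h1
    exact h1
  -- the spectrum of `A ^ N - 1` is `{0}`-contained
  set M : Matrix (Fin n) (Fin n) C := A ^ N - 1 with hM
  have hspecM : spectrum C M ⊆ {0} := by
    have hdeg : 0 < (X ^ N - 1 : C[X]).degree := by
      have hd : (X ^ N - 1 : C[X]).degree = N := by
        simpa using degree_X_pow_sub_C (n := N) (by omega) (1 : C)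
      rw [hd]
      exact_mod_cast hN1
    have hmapM := spectrum.map_polynomial_aeval_of_degree_pos A (X ^ N - 1 : C[X]) hdeg
    have haev : aeval A (X ^ N - 1 : C[X]) = M := by
      simp [hM]
    rw [haev] at hmapM
    rw [hmapM]
    rintro x ⟨μ, hμ, rfl⟩
    simp [hroot1 μ hμ]
  -- the characteristic polynomial of `M` is `X ^ n`
  have hcharM : M.charpoly = X ^ n := by
    have hmon : M.charpoly.Monic := M.charpoly_monic
    have hsplits : M.charpoly.Splits := IsAlgClosed.splits _
    have hdeg' : M.charpoly.natDegree = n := by simp [Matrix.charpoly_natDegree_eq_dim]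
    have hroots : M.charpoly.roots = Multiset.replicate n 0 := by
      have hcardroots : Multiset.card M.charpoly.roots = n := by
        exact (splits_iff_card_roots.mp hsplits).trans hdeg'
      rw [Multiset.eq_replicate]
      refine ⟨hcardroots, fun b hb => ?_⟩
      have : b ∈ spectrum C M := by
        rw [aux_mem_spectrum_iff_isRoot]
        exact (mem_roots hmon.ne_zero).mp hb
      simpa using hspecM this
    calc M.charpoly = (M.charpoly.roots.map fun a => X - Polynomial.C a).prod :=
          hsplits.eq_prod_roots_of_monic hmon
      _ = X ^ n := by rw [hroots]; simp [Multiset.map_replicate, Multiset.prod_replicate]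
  -- Cayley–Hamilton
  have := M.aeval_self_charpoly
  rw [hcharM] at this
  simpa [hM, hN, hA] using this
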